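/- Let T > 0, A ≥ 0, and let w : [0,T) → ℝ be continuously differentiable and satisfy w'(t) + w(t)² ≤ A · exp(−∫₀ᵗ w(τ) dτ) for all t ∈ [0,T). Then exp(∫₀ᵗ w(τ) dτ) ≤ 1 + w(0) t + (A/2) t² for all t ∈ [0,T). -/

import Mathlib

open Set

-- ODE comparison estimate: if `w' + w² ≤ A·exp(−∫₀ᵗ w)` on `[0,T)`, then
-- `exp(∫₀ᵗ w) ≤ 1 + w(0) t + (A/2) t²` on `[0,T)`.
theorem ode_comparison_estimate
    (T A : ℝ) (hT : 0 < T) (hA : 0 ≤ A)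
    (w w' : ℝ → ℝ)
    (hw : ∀ t ∈ Ico (0:ℝ) T, HasDerivWithinAt w (w' t) (Ico 0 T) t)
    (hw'c : ContinuousOn w' (Ico 0 T))
    (hineq : ∀ t ∈ Ico (0:ℝ) T,
      w' t + (w t) ^ 2 ≤ A * Real.exp (-∫ τ in (0:ℝ)..t, w τ)) :
    ∀ t ∈ Ico (0:ℝ) T,
      Real.exp (∫ τ in (0:ℝ)..t, w τ) ≤ 1 + w 0 * t + (A / 2) * t ^ 2 := by
  intro b hb
  obtain ⟨hb0, hbT⟩ := hb
  -- continuity of w on Ico 0 T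
  have hwc : ContinuousOn w (Ico 0 T) := fun t ht => (hw t ht).continuousWithinAt
  set W : ℝ → ℝ := fun t => ∫ τ in (0:ℝ)..t, w τ with hW
  have hsub : Icc (0:ℝ) b ⊆ Ico 0 T := Icc_subset_Ico_right hbT
  have hwcb : ContinuousOn w (Icc 0 b) := hwc.mono hsub
  -- W is continuous on Icc 0 b
  have hWcont : ContinuousOn W (Icc 0 b) := by
    have : ContinuousOn W (uIcc 0 b) :=
      intervalIntegral.continuousOn_primitive_interval (by
        rw [uIcc_of_le hb0]; exact hwcb.integrableOn_Icc)
    rwa [uIcc_of_le hb0] at this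
  -- W has derivative w t at interior points
  have hWderiv : ∀ t ∈ Ioo (0:ℝ) b, HasDerivAt W (w t) t := by
    intro t ht
    have htT : t ∈ Ioo (0:ℝ) T := ⟨ht.1, ht.2.trans hbT⟩
    have hnhds : Ico (0:ℝ) T ∈ nhds t := Ico_mem_nhds htT.1 htT.2
    have hct : ContinuousAt w t := hwc.continuousAt hnhds
    have hint : IntervalIntegrable w MeasureTheory.volume 0 t := by
      apply ContinuousOn.intervalIntegrable
      rw [uIcc_of_le (le_of_lt ht.1)]
      exact hwc.mono (Icc_subset_Ico_right htT.2)
    have hmeas : StronglyMeasurableAtFilter w (nhds t) MeasureTheory.volume :=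
      (hwc.mono Ioo_subset_Ico_self).stronglyMeasurableAtFilter isOpen_Ioo t htT
    exact intervalIntegral.integral_hasDerivAt_right hint hmeas hct
  -- w has full derivative w' t at interior points
  have hwderiv : ∀ t ∈ Ioo (0:ℝ) b, HasDerivAt w (w' t) t := by
    intro t ht
    have htT : t ∈ Ioo (0:ℝ) T := ⟨ht.1, ht.2.trans hbT⟩
    exact (hw t ⟨le_of_lt htT.1, htT.2⟩).hasDerivAt (Ico_mem_nhds htT.1 htT.2)
  set G : ℝ → ℝ := fun t => w t * Real.exp (W t) - (w 0 + A * t) with hG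
  have hGcont : ContinuousOn G (Icc 0 b) :=
    (hwcb.mul (Real.continuous_exp.comp_continuousOn hWcont)).sub
      (continuousOn_const.add (continuousOn_const.mul continuousOn_id))
  have hGderiv : ∀ t ∈ Ioo (0:ℝ) b,
      HasDerivAt G ((w' t + (w t) ^ 2) * Real.exp (W t) - A) t := by
    intro t ht
    have h1 : HasDerivAt (fun s => Real.exp (W s)) (w t * Real.exp (W t)) t := by
      have := (Real.hasDerivAt_exp (W t)).comp t (hWderiv t ht)
      rw [mul_comm]; exact (hWderiv t ht).exp
    have h2 : HasDerivAt (fun s => w s * Real.exp (W s))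
        (w' t * Real.exp (W t) + w t * (w t * Real.exp (W t))) t :=
      (hwderiv t ht).mul h1
    have h3 : HasDerivAt (fun s => w 0 + A * s) A t := by
      simpa using ((hasDerivAt_id' t).const_mul A).const_add (w 0)
    have := h2.sub h3
    exact this.congr_deriv (by ring)
  have hGnonpos : ∀ t ∈ Ioo (0:ℝ) b, (w' t + (w t) ^ 2) * Real.exp (W t) - A ≤ 0 := by
    intro t ht
    have htT : t ∈ Ico (0:ℝ) T := ⟨le_of_lt ht.1, ht.2.trans hbT⟩
    have h := hineq t htT
    have hexp : (0:ℝ) < Real.exp (W t) := Real.exp_pos _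
    have : (w' t + (w t) ^ 2) * Real.exp (W t) ≤
        (A * Real.exp (-W t)) * Real.exp (W t) :=
      mul_le_mul_of_nonneg_right h (le_of_lt hexp)
    rw [mul_assoc, ← Real.exp_add, neg_add_cancel, Real.exp_zero, mul_one] at this
    linarith
  -- G is antitone on Icc 0 b
  have hGanti : AntitoneOn G (Icc 0 b) := by
    apply antitoneOn_of_deriv_nonpos (convex_Icc 0 b) hGcont
    · intro t ht
      rw [interior_Icc] at ht
      exact (hGderiv t ht).differentiableAt.differentiableWithinAt
    · intro t ht
      rw [interior_Icc] at ht
      rw [(hGderiv t ht).deriv]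
      exact hGnonpos t ht
  have hW0 : W 0 = 0 := intervalIntegral.integral_same
  have hG0 : G 0 = 0 := by simp [hG, hW0]
  have hGle : ∀ t ∈ Icc (0:ℝ) b, G t ≤ 0 := by
    intro t ht
    have := hGanti (left_mem_Icc.mpr hb0) ht ht.1
    rwa [hG0] at this
  set F : ℝ → ℝ := fun t => Real.exp (W t) - (1 + w 0 * t + (A / 2) * t ^ 2) with hF
  have hFcont : ContinuousOn F (Icc 0 b) :=
    (Real.continuous_exp.comp_continuousOn hWcont).sub
      (by fun_prop)
  have hFderiv : ∀ t ∈ Ioo (0:ℝ) b, HasDerivAt F (G t) t := by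
    intro t ht
    have h1 : HasDerivAt (fun s => Real.exp (W s)) (w t * Real.exp (W t)) t := by
      have := (Real.hasDerivAt_exp (W t)).comp t (hWderiv t ht)
      rw [mul_comm]; exact (hWderiv t ht).exp
    have h2 : HasDerivAt (fun s => 1 + w 0 * s + (A / 2) * s ^ 2)
        (w 0 + A * t) t := by
      have ha : HasDerivAt (fun s : ℝ => 1 + w 0 * s) (w 0) t := by
        simpa using ((hasDerivAt_id' t).const_mul (w 0)).const_add 1
      have hbb : HasDerivAt (fun s : ℝ => (A / 2) * s ^ 2) (A * t) t := by
        have := (hasDerivAt_pow 2 t).const_mul (A / 2)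
        exact this.congr_deriv (by norm_num; ring)
      exact ha.add hbb
    exact h1.sub h2
  have hFanti : AntitoneOn F (Icc 0 b) := by
    apply antitoneOn_of_deriv_nonpos (convex_Icc 0 b) hFcont
    · intro t ht
      rw [interior_Icc] at ht
      exact (hFderiv t ht).differentiableAt.differentiableWithinAt
    · intro t ht
      rw [interior_Icc] at ht
      rw [(hFderiv t ht).deriv]
      exact hGle t (Ioo_subset_Icc_self ht)
  have hF0 : F 0 = 0 := by simp [hF, hW0]
  have := hFanti (left_mem_Icc.mpr hb0) (right_mem_Icc.mpr hb0) hb0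
  rw [hF0] at this
  have : F b ≤ 0 := this
  simp only [hF] at this
  linarith
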